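/- Let X, Y and Z_1, …, Z_m be finitely-valued random variables on a common probability space such that for each i ∈ {1, …, m}, Z_i is conditionally independent of Z_{<i} = (Z_1, …, Z_{i−1}) given (X, Y) (equivalently, I(Z_i; Z_{<i} | X, Y) = 0), and suppose there is a real number I_b with I(Z_i; Y | X) = I_b for every i. Then I(Z_{1:m}; Y | X) ≤ min( H(Y | X), m · I_b ). -/

import Mathlib

open MeasureTheory

/-- Shannon entropy (in nats) of a finitely-valued random variable `X` under `μ`. -/
noncomputable def entH {Ω : Type*} [MeasurableSpace Ω] (μ : Measure Ω)
    {S : Type*} [Fintype S] (X : Ω → S) : ℝ :=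
  ∑ s : S, Real.negMulLog ((μ (X ⁻¹' {s})).toReal)

/-- Conditional Shannon entropy `H(Y | X) = H(X, Y) - H(X)`. -/
noncomputable def condEntH {Ω : Type*} [MeasurableSpace Ω] (μ : Measure Ω)
    {S T : Type*} [Fintype S] [Fintype T] (Y : Ω → T) (X : Ω → S) : ℝ :=
  entH μ (fun ω => (X ω, Y ω)) - entH μ X

/-- Conditional mutual information `I(A; B | C) = H(A | C) - H(A | (B, C))`. -/
noncomputable def condMI {Ω : Type*} [MeasurableSpace Ω] (μ : Measure Ω)
    {A B C : Type*} [Fintype A] [Fintype B] [Fintype C]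
    (fA : Ω → A) (fB : Ω → B) (fC : Ω → C) : ℝ :=
  condEntH μ fA fC - condEntH μ fA (fun ω => (fB ω, fC ω))

open Real Finset in
section
namespace HPUBaux


lemma negMulLog_sum_le {T : Type*} [Fintype T] (q : T → ℝ) (hq : ∀ t, 0 ≤ q t) :
    Real.negMulLog (∑ t, q t) ≤ ∑ t, Real.negMulLog (q t) := by
  have h1 : Real.negMulLog (∑ t, q t) = ∑ t, -(q t * Real.log (∑ t, q t)) := by
    rw [Real.negMulLog, neg_mul, Finset.sum_mul, ← Finset.sum_neg_distrib]
  rw [h1]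
  apply Finset.sum_le_sum
  intro t _
  rw [Real.negMulLog, neg_mul, neg_le_neg_iff]
  rcases eq_or_lt_of_le (hq t) with h | h
  · simp [← h]
  · exact mul_le_mul_of_nonneg_left
      (Real.log_le_log h (Finset.single_le_sum (fun t _ => hq t) (Finset.mem_univ t)))
      (hq t)

/-- Pointwise Gibbs-type bound. -/
lemma pointwise_bound {f A B M : ℝ} (hf : 0 ≤ f) (hfA : f ≤ A) (hfB : f ≤ B) (hM : 0 < M) :
    f * Real.log A + f * Real.log B - f * Real.log f - f * Real.log M ≤ A * B / M - f := by
  rcases eq_or_lt_of_le hf with h | h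
  · rw [← h]
    simp only [zero_mul, add_zero, sub_zero, zero_add, sub_self]
    have hA : 0 ≤ A := h ▸ hfA
    have hB : 0 ≤ B := h ▸ hfB
    positivity
  · have hA : 0 < A := lt_of_lt_of_le h hfA
    have hB : 0 < B := lt_of_lt_of_le h hfB
    have hx : 0 < A * B / (f * M) := by positivity
    have hlog := Real.log_le_sub_one_of_pos hx
    have key : f * Real.log (A * B / (f * M)) ≤ A * B / M - f := by
      calc f * Real.log (A * B / (f * M)) ≤ f * (A * B / (f * M) - 1) :=
            mul_le_mul_of_nonneg_left hlog hf
        _ = A * B / M - f := by field_simp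
    calc f * Real.log A + f * Real.log B - f * Real.log f - f * Real.log M
        = f * Real.log (A * B / (f * M)) := by
          rw [Real.log_div (by positivity) (by positivity), Real.log_mul hA.ne' hB.ne',
            Real.log_mul h.ne' hM.ne']
          ring
      _ ≤ A * B / M - f := key



variable {Ω : Type*} [MeasurableSpace Ω] {μ : Measure Ω}

def MFib {Ω S : Type*} [MeasurableSpace Ω] (f : Ω → S) : Prop :=
  ∀ s, MeasurableSet (f ⁻¹' {s})

lemma MFib.of_meas {S : Type*} [MeasurableSpace S] [DiscreteMeasurableSpace S]
    {f : Ω → S} (hf : Measurable f) : MFib f :=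
  fun s => hf .of_discrete

lemma MFib.pair {S T : Type*} {f : Ω → S} {g : Ω → T} (hf : MFib f) (hg : MFib g) :
    MFib (fun ω => (f ω, g ω)) := by
  intro p
  have h : (fun ω => (f ω, g ω)) ⁻¹' {p} = f ⁻¹' {p.1} ∩ g ⁻¹' {p.2} := by
    ext ω; simp [Prod.ext_iff]
  rw [h]; exact (hf _).inter (hg _)

lemma MFib.pi {ι : Type*} [Fintype ι] {κ : ι → Type*} {f : ∀ i, Ω → κ i}
    (hf : ∀ i, MFib (f i)) : MFib (fun ω (i : ι) => f i ω) := by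
  intro w
  have h : (fun ω (i : ι) => f i ω) ⁻¹' {w} = ⋂ i, (f i) ⁻¹' {w i} := by
    ext ω; simp [funext_iff]
  rw [h]; exact MeasurableSet.iInter fun i => hf i _

open scoped Classical in
lemma toReal_meas_comp {U V : Type*} [Fintype U] [IsProbabilityMeasure μ]
    {f : Ω → U} (hf : MFib f) (pr : U → V) (v : V) :
    (μ ((fun ω => pr (f ω)) ⁻¹' {v})).toReal
      = ∑ u : U, if pr u = v then (μ (f ⁻¹' {u})).toReal else 0 := by
  classical
  have hset : (fun ω => pr (f ω)) ⁻¹' {v}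
      = ⋃ u ∈ (Finset.univ.filter fun u => pr u = v), f ⁻¹' {u} := by
    ext ω; simp
  rw [hset, measure_biUnion_finset ?hd (fun u _ => hf u)]
  · rw [ENNReal.toReal_sum (fun u _ => measure_ne_top μ _), Finset.sum_filter]
  case hd =>
    intro u hu u' hu' hne
    refine Set.disjoint_left.2 fun ω h h' => hne ?_
    simp only [Set.mem_preimage, Set.mem_singleton_iff] at h h'
    rw [← h, ← h']

open scoped Classical in
lemma entH_comp {U V : Type*} [Fintype U] [Fintype V] [IsProbabilityMeasure μ]
    {f : Ω → U} (hf : MFib f) (pr : U → V) :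
    entH μ (fun ω => pr (f ω))
      = ∑ v : V, Real.negMulLog (∑ u : U, if pr u = v then (μ (f ⁻¹' {u})).toReal else 0) := by
  unfold entH
  exact Finset.sum_congr rfl fun v _ => by rw [toReal_meas_comp hf]

open scoped Classical in
lemma entH_comp' {U V : Type*} [Fintype U] [Fintype V] [IsProbabilityMeasure μ]
    {f : Ω → U} (hf : MFib f) (pr : U → V) (g : Ω → V) (hg : ∀ ω, g ω = pr (f ω)) :
    entH μ g
      = ∑ v : V, Real.negMulLog (∑ u : U, if pr u = v then (μ (f ⁻¹' {u})).toReal else 0) := by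
  have h : g = fun ω => pr (f ω) := funext hg
  rw [h, entH_comp hf]

lemma entH_congr_inj {U V : Type*} [Fintype U] [Fintype V] (f : Ω → U) (g : Ω → V)
    (pr : U → V) (hpr : Function.Injective pr) (hfg : ∀ ω, g ω = pr (f ω)) :
    entH μ g = entH μ f := by
  classical
  unfold entH
  rw [← Finset.sum_subset (Finset.subset_univ (Finset.univ.image pr)) ?hz]
  · rw [Finset.sum_image (fun a _ b _ h => hpr h)]
    refine Finset.sum_congr rfl fun u _ => ?_
    have h : g ⁻¹' {pr u} = f ⁻¹' {u} := by
      ext ω; simp [hfg ω, hpr.eq_iff]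
    rw [h]
  case hz =>
    intro v _ hv
    have h : g ⁻¹' {v} = ∅ := by
      ext ω
      simp only [Set.mem_preimage, Set.mem_singleton_iff, Set.mem_empty_iff_false, iff_false]
      intro h
      exact hv (Finset.mem_image.2 ⟨f ω, Finset.mem_univ _, by rw [← hfg ω, h]⟩)
    rw [h]; simp


section Algebra

variable {A B C D E : Type*} [Fintype A] [Fintype B] [Fintype C] [Fintype D] [Fintype E]

/-- Full congruence for `condMI` under injective recodings of the three slots. -/
lemma condMI_congr {fA : Ω → A} {fB : Ω → B} {fC : Ω → C}
    {A' B' C' : Type*} [Fintype A'] [Fintype B'] [Fintype C']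
    {fA' : Ω → A'} {fB' : Ω → B'} {fC' : Ω → C'}
    (prA : A → A') (prB : B → B') (prC : C → C')
    (hA : Function.Injective prA) (hB : Function.Injective prB) (hC : Function.Injective prC)
    (eA : ∀ ω, fA' ω = prA (fA ω)) (eB : ∀ ω, fB' ω = prB (fB ω))
    (eC : ∀ ω, fC' ω = prC (fC ω)) :
    condMI μ fA' fB' fC' = condMI μ fA fB fC := by
  unfold condMI condEntH
  have e1 : entH μ (fun ω => (fC' ω, fA' ω)) = entH μ (fun ω => (fC ω, fA ω)) :=
    entH_congr_inj _ _ (Prod.map prC prA) (hC.prodMap hA)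
      (fun ω => by simp [eA ω, eC ω, Prod.map])
  have e2 : entH μ fC' = entH μ fC :=
    entH_congr_inj _ _ prC hC (fun ω => eC ω)
  have e3 : entH μ (fun ω => ((fB' ω, fC' ω), fA' ω))
      = entH μ (fun ω => ((fB ω, fC ω), fA ω)) :=
    entH_congr_inj _ _ (Prod.map (Prod.map prB prC) prA) ((hB.prodMap hC).prodMap hA)
      (fun ω => by simp [eA ω, eB ω, eC ω, Prod.map])
  have e4 : entH μ (fun ω => (fB' ω, fC' ω)) = entH μ (fun ω => (fB ω, fC ω)) :=
    entH_congr_inj _ _ (Prod.map prB prC) (hB.prodMap hC)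
      (fun ω => by simp [eB ω, eC ω, Prod.map])
  rw [e1, e2, e3, e4]

/-- Symmetry of conditional mutual information. -/
lemma condMI_comm (fA : Ω → A) (fB : Ω → B) (fC : Ω → C) :
    condMI μ fA fB fC = condMI μ fB fA fC := by
  unfold condMI condEntH
  have e1 : entH μ (fun ω => (fC ω, fA ω)) = entH μ (fun ω => (fA ω, fC ω)) :=
    entH_congr_inj _ _ (fun p => (p.2, p.1))
      ((Function.LeftInverse.injective (g := fun p => (p.2, p.1)) (fun p => rfl)))
      (fun ω => rfl)
  have e2 : entH μ (fun ω => (fC ω, fB ω)) = entH μ (fun ω => (fB ω, fC ω)) :=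
    entH_congr_inj _ _ (fun p => (p.2, p.1))
      ((Function.LeftInverse.injective (g := fun p => (p.2, p.1)) (fun p => rfl)))
      (fun ω => rfl)
  have e3 : entH μ (fun ω => ((fB ω, fC ω), fA ω))
      = entH μ (fun ω => ((fA ω, fC ω), fB ω)) :=
    entH_congr_inj _ _ (fun p => ((p.2, p.1.2), p.1.1))
      ((Function.LeftInverse.injective (g := fun p => ((p.2, p.1.2), p.1.1)) (fun p => rfl)))
      (fun ω => rfl)
  linarith [e1, e2, e3]

/-- Chain rule for `condMI` in the second slot. -/
lemma condMI_chain_snd (fA : Ω → A) (fY : Ω → D) (fW : Ω → E) (fX : Ω → C) :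
    condMI μ fA (fun ω => (fY ω, fW ω)) fX
      = condMI μ fA fW fX + condMI μ fA fY (fun ω => (fW ω, fX ω)) := by
  unfold condMI condEntH
  have e1 : entH μ (fun ω => (((fY ω, fW ω), fX ω), fA ω))
      = entH μ (fun ω => ((fY ω, (fW ω, fX ω)), fA ω)) :=
    entH_congr_inj _ _ (fun p => (((p.1.1, p.1.2.1), p.1.2.2), p.2))
      ((Function.LeftInverse.injective
        (g := fun p => ((p.1.1.1, (p.1.1.2, p.1.2)), p.2)) (fun p => rfl)))
      (fun ω => rfl)
  have e2 : entH μ (fun ω => ((fY ω, fW ω), fX ω))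
      = entH μ (fun ω => (fY ω, (fW ω, fX ω))) :=
    entH_congr_inj _ _ (fun p => ((p.1, p.2.1), p.2.2))
      ((Function.LeftInverse.injective
        (g := fun p => (p.1.1, (p.1.2, p.2))) (fun p => rfl)))
      (fun ω => rfl)
  linarith [e1, e2]

/-- Chain rule for `condMI` in the first slot. -/
lemma condMI_chain_fst (fAa : Ω → A) (fAb : Ω → B) (fY : Ω → D) (fX : Ω → C) :
    condMI μ (fun ω => (fAa ω, fAb ω)) fY fX
      = condMI μ fAb fY fX + condMI μ fAa fY (fun ω => (fAb ω, fX ω)) := by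
  unfold condMI condEntH
  have e1 : entH μ (fun ω => (fX ω, (fAa ω, fAb ω)))
      = entH μ (fun ω => ((fAb ω, fX ω), fAa ω)) :=
    entH_congr_inj _ _ (fun p => (p.1.2, (p.2, p.1.1)))
      ((Function.LeftInverse.injective
        (g := fun p => ((p.2.2, p.1), p.2.1)) (fun p => rfl)))
      (fun ω => rfl)
  have e2 : entH μ (fun ω => ((fY ω, fX ω), (fAa ω, fAb ω)))
      = entH μ (fun ω => ((fY ω, (fAb ω, fX ω)), fAa ω)) :=
    entH_congr_inj _ _ (fun p => ((p.1.1, p.1.2.2), (p.2, p.1.2.1)))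
      ((Function.LeftInverse.injective
        (g := fun p => ((p.1.1, (p.2.2, p.1.2)), p.2.1)) (fun p => rfl)))
      (fun ω => rfl)
  have e3 : entH μ (fun ω => (fX ω, fAb ω)) = entH μ (fun ω => (fAb ω, fX ω)) :=
    entH_congr_inj _ _ (fun p => (p.2, p.1))
      ((Function.LeftInverse.injective (g := fun p => (p.2, p.1)) (fun p => rfl)))
      (fun ω => rfl)
  have e4 : entH μ (fun ω => ((fY ω, fX ω), fAb ω))
      = entH μ (fun ω => (fY ω, (fAb ω, fX ω))) :=
    entH_congr_inj _ _ (fun p => ((p.1, p.2.2), p.2.1))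
      ((Function.LeftInverse.injective
        (g := fun p => (p.1.1, (p.2, p.1.2))) (fun p => rfl)))
      (fun ω => rfl)
  linarith [e1, e2, e3, e4]

/-- `condMI` vanishes when the first variable takes values in a subsingleton. -/
lemma condMI_of_subsingleton {U : Type*} [Fintype U] [Subsingleton U] [Nonempty U]
    (f : Ω → U) (fB : Ω → B) (fC : Ω → C) : condMI μ f fB fC = 0 := by
  obtain ⟨u0⟩ := (inferInstance : Nonempty U)
  unfold condMI condEntH
  have e1 : entH μ (fun ω => (fC ω, f ω)) = entH μ fC :=
    entH_congr_inj _ _ (fun c => (c, u0))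
      (fun a b h => congrArg Prod.fst h)
      (fun ω => by rw [Subsingleton.elim (f ω) u0])
  have e2 : entH μ (fun ω => ((fB ω, fC ω), f ω)) = entH μ (fun ω => (fB ω, fC ω)) :=
    entH_congr_inj _ _ (fun c => (c, u0))
      (fun a b h => congrArg Prod.fst h)
      (fun ω => by rw [Subsingleton.elim (f ω) u0])
  rw [e1, e2]; ring

end Algebra

section Nonneg

variable [IsProbabilityMeasure μ]

lemma condEntH_nonneg {S T : Type*} [Fintype S] [Fintype T]
    {Y : Ω → T} {X : Ω → S} (hX : MFib X) (hY : MFib Y) : 0 ≤ condEntH μ Y X := by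
  classical
  have hp : MFib (fun ω => (X ω, Y ω)) := hX.pair hY
  have h1 : entH μ X
      = ∑ s : S, Real.negMulLog
          (∑ t : T, (μ ((fun ω => (X ω, Y ω)) ⁻¹' {(s, t)})).toReal) := by
    have h0 : entH μ X = entH μ (fun ω => Prod.fst ((X ω, Y ω))) := rfl
    rw [h0, entH_comp hp Prod.fst]
    refine Finset.sum_congr rfl fun s _ => ?_
    congr 1
    rw [Fintype.sum_prod_type, Finset.sum_comm]
    simp [Finset.sum_ite_eq']
  have h2 : entH μ (fun ω => (X ω, Y ω))
      = ∑ s : S, ∑ t : T,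
          Real.negMulLog ((μ ((fun ω => (X ω, Y ω)) ⁻¹' {(s, t)})).toReal) := by
    rw [entH, Fintype.sum_prod_type]
  rw [condEntH, sub_nonneg, h1, h2]
  exact Finset.sum_le_sum fun s _ =>
    negMulLog_sum_le _ (fun t => ENNReal.toReal_nonneg)

end Nonneg

lemma submod_slice {A B : Type*} [Fintype A] [Fintype B] (f : A → B → ℝ)
    (hf : ∀ a b, 0 ≤ f a b) :
    (∑ a, ∑ b, Real.negMulLog (f a b)) + Real.negMulLog (∑ a, ∑ b, f a b)
      ≤ (∑ a, Real.negMulLog (∑ b, f a b)) + ∑ b, Real.negMulLog (∑ a, f a b) := by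
  classical
  have hA0 : ∀ a, 0 ≤ ∑ b, f a b := fun a => Finset.sum_nonneg fun b _ => hf a b
  have hB0 : ∀ b, 0 ≤ ∑ a, f a b := fun b => Finset.sum_nonneg fun a _ => hf a b
  have hM0 : 0 ≤ ∑ a, ∑ b, f a b := Finset.sum_nonneg fun a _ => hA0 a
  rcases eq_or_lt_of_le hM0 with h0 | hMpos
  · have hz : ∀ a b, f a b = 0 := by
      intro a b
      have h1 : ∑ a, ∑ b, f a b = 0 := h0.symm
      rw [Finset.sum_eq_zero_iff_of_nonneg (fun a _ => hA0 a)] at h1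
      have h2 := h1 a (Finset.mem_univ a)
      rw [Finset.sum_eq_zero_iff_of_nonneg (fun b _ => hf a b)] at h2
      exact h2 b (Finset.mem_univ b)
    simp [hz]
  · set M := ∑ a, ∑ b, f a b with hM
    have hMB : ∑ b, ∑ a, f a b = M := by rw [Finset.sum_comm]
    have hE1 : (∑ a, ∑ b, Real.negMulLog (f a b))
        = -∑ a, ∑ b, f a b * Real.log (f a b) := by
      simp [Real.negMulLog, neg_mul, Finset.sum_neg_distrib]
    have hE2 : Real.negMulLog M = -∑ a, ∑ b, f a b * Real.log M := by
      rw [Real.negMulLog, neg_mul, neg_inj, hM, Finset.sum_mul]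
      exact Finset.sum_congr rfl fun a _ => Finset.sum_mul _ _ _
    have hE3 : (∑ a, Real.negMulLog (∑ b, f a b))
        = -∑ a, ∑ b, f a b * Real.log (∑ b', f a b') := by
      rw [← Finset.sum_neg_distrib]
      refine Finset.sum_congr rfl fun a _ => ?_
      rw [Real.negMulLog, neg_mul, neg_inj, Finset.sum_mul]
    have hE4 : (∑ b, Real.negMulLog (∑ a, f a b))
        = -∑ a, ∑ b, f a b * Real.log (∑ a', f a' b) := by
      rw [Finset.sum_comm (γ := A), ← Finset.sum_neg_distrib]
      refine Finset.sum_congr rfl fun b _ => ?_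
      rw [Real.negMulLog, neg_mul, neg_inj, Finset.sum_mul]
    have hkey : ∑ a, ∑ b, (f a b * Real.log (∑ b', f a b') + f a b * Real.log (∑ a', f a' b)
          - f a b * Real.log (f a b) - f a b * Real.log M)
        ≤ ∑ a, ∑ b, ((∑ b', f a b') * (∑ a', f a' b) / M - f a b) := by
      refine Finset.sum_le_sum fun a _ => Finset.sum_le_sum fun b _ => ?_
      exact pointwise_bound (hf a b)
        (Finset.single_le_sum (fun b' _ => hf a b') (Finset.mem_univ b))
        (Finset.single_le_sum (fun a' _ => hf a' b) (Finset.mem_univ a)) hMpos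
    have hR : ∑ a, ∑ b, ((∑ b', f a b') * (∑ a', f a' b) / M - f a b) = 0 := by
      have h1 : ∑ a, ∑ b, ((∑ b', f a b') * (∑ a', f a' b) / M) = M := by
        have h2 : ∑ a, ∑ b, ((∑ b', f a b') * (∑ a', f a' b) / M)
            = ((∑ a, ∑ b', f a b') * (∑ b, ∑ a', f a' b)) / M := by
          rw [Finset.sum_mul_sum, Finset.sum_div]
          exact Finset.sum_congr rfl fun a _ => (Finset.sum_div _ _ _).symm
        rw [h2, hMB, ← hM, mul_div_assoc, div_self hMpos.ne', mul_one]
      simp only [Finset.sum_sub_distrib] at h1 ⊢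
      rw [h1, ← hM, sub_self]
    rw [hE1, hE2, hE3, hE4]
    simp only [Finset.sum_sub_distrib, Finset.sum_add_distrib] at hkey hR
    linarith [hkey, hR]


lemma submod3 {A B C : Type*} [Fintype A] [Fintype B] [Fintype C] (r : A → B → C → ℝ)
    (h : ∀ a b c, 0 ≤ r a b c) :
    (∑ a, ∑ b, ∑ c, Real.negMulLog (r a b c)) + ∑ c, Real.negMulLog (∑ a, ∑ b, r a b c)
      ≤ (∑ c, ∑ a, Real.negMulLog (∑ b, r a b c))
        + ∑ b, ∑ c, Real.negMulLog (∑ a, r a b c) := by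
  have e1 : (∑ a, ∑ b, ∑ c, Real.negMulLog (r a b c))
      = ∑ c, ∑ a, ∑ b, Real.negMulLog (r a b c) := by
    have e1a : (∑ a, ∑ b, ∑ c, Real.negMulLog (r a b c))
        = ∑ a, ∑ c, ∑ b, Real.negMulLog (r a b c) :=
      Finset.sum_congr rfl fun a _ => by rw [Finset.sum_comm]
    rw [e1a, Finset.sum_comm]
  have e2 : (∑ b, ∑ c, Real.negMulLog (∑ a, r a b c))
      = ∑ c, ∑ b, Real.negMulLog (∑ a, r a b c) := by rw [Finset.sum_comm]
  rw [e1, e2, ← Finset.sum_add_distrib, ← Finset.sum_add_distrib]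
  exact Finset.sum_le_sum fun c _ =>
    submod_slice (fun a b => r a b c) (fun a b => h a b c)

lemma condMI_nonneg [IsProbabilityMeasure μ] {A B C : Type*} [Fintype A] [Fintype B] [Fintype C]
    {fA : Ω → A} {fB : Ω → B} {fC : Ω → C}
    (hA : MFib fA) (hB : MFib fB) (hC : MFib fC) : 0 ≤ condMI μ fA fB fC := by
  classical
  have hp : MFib (fun ω => (fA ω, (fB ω, fC ω))) := hA.pair (hB.pair hC)
  set r : A → B → C → ℝ :=
    fun a b c => (μ ((fun ω => (fA ω, (fB ω, fC ω))) ⁻¹' {(a, (b, c))})).toReal with hr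
  have hr0 : ∀ a b c, 0 ≤ r a b c := fun a b c => ENNReal.toReal_nonneg
  have h3 : entH μ (fun ω => ((fB ω, fC ω), fA ω))
      = ∑ a, ∑ b, ∑ c, Real.negMulLog (r a b c) := by
    have e := entH_congr_inj (μ := μ) (fun ω => (fA ω, (fB ω, fC ω)))
      (fun ω => ((fB ω, fC ω), fA ω)) (fun p => (p.2, p.1))
      ((Function.LeftInverse.injective (g := fun p => (p.2, p.1)) (fun p => rfl)))
      (fun ω => rfl)
    rw [e, entH, Fintype.sum_prod_type]
    exact Finset.sum_congr rfl fun a _ => Fintype.sum_prod_type _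
  have h2 : entH μ (fun ω => (fC ω, fA ω)) = ∑ c, ∑ a, Real.negMulLog (∑ b, r a b c) := by
    rw [entH_comp' hp (fun p : A × (B × C) => (p.2.2, p.1)) _ (fun ω => rfl),
      Fintype.sum_prod_type]
    refine Finset.sum_congr rfl fun c _ => Finset.sum_congr rfl fun a _ => ?_
    congr 1
    rw [Fintype.sum_prod_type]
    simp [Fintype.sum_prod_type, Prod.ext_iff, ite_and, Finset.sum_ite_eq, Finset.sum_ite_eq']
    rfl
  have h4 : entH μ fC = ∑ c, Real.negMulLog (∑ a, ∑ b, r a b c) := by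
    rw [entH_comp' hp (fun p : A × (B × C) => p.2.2) _ (fun ω => rfl)]
    refine Finset.sum_congr rfl fun c _ => ?_
    congr 1
    rw [Fintype.sum_prod_type]
    simp [Fintype.sum_prod_type, Finset.sum_ite_eq, Finset.sum_ite_eq']
    rfl
  have h5 : entH μ (fun ω => (fB ω, fC ω)) = ∑ b, ∑ c, Real.negMulLog (∑ a, r a b c) := by
    rw [entH_comp' hp (fun p : A × (B × C) => p.2) _ (fun ω => rfl),
      Fintype.sum_prod_type]
    refine Finset.sum_congr rfl fun b _ => Finset.sum_congr rfl fun c _ => ?_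
    congr 1
    rw [Fintype.sum_prod_type]
    simp [Fintype.sum_prod_type, Prod.ext_iff, ite_and, Finset.sum_ite_eq, Finset.sum_ite_eq']
    rfl
  have key := submod3 r hr0
  unfold condMI condEntH
  rw [h2, h3, h4, h5] at *
  linarith [key]

end HPUBaux
end

open HPUBaux Real Finset

/-- **Homogeneous parallel upper bound.**
If each `Z i` is conditionally independent of `Z_{<i}` given `(X, Y)` and every call has
single-call information `I(Z i; Y | X) = I_b`, then
`I(Z_{1:m}; Y | X) ≤ min (H(Y | X)) (m · I_b)`. -/
theorem homogeneous_parallel_upper_bound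
    {Ω : Type*} [MeasurableSpace Ω] (μ : Measure Ω) [IsProbabilityMeasure μ]
    {𝓧 𝓨 : Type*} [Fintype 𝓧] [Nonempty 𝓧] [Fintype 𝓨] [Nonempty 𝓨]
    [MeasurableSpace 𝓧] [DiscreteMeasurableSpace 𝓧]
    [MeasurableSpace 𝓨] [DiscreteMeasurableSpace 𝓨]
    {m : ℕ} {𝓩 : Fin m → Type*} [∀ i, Fintype (𝓩 i)] [∀ i, Nonempty (𝓩 i)]
    [∀ i, MeasurableSpace (𝓩 i)] [∀ i, DiscreteMeasurableSpace (𝓩 i)]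
    (X : Ω → 𝓧) (Y : Ω → 𝓨) (Z : ∀ i, Ω → 𝓩 i)
    (hX : Measurable X) (hY : Measurable Y) (hZ : ∀ i, Measurable (Z i))
    (hCI : ∀ i : Fin m, condMI μ (Z i)
        (fun ω (j : Fin i.val) => Z (Fin.castLE i.isLt.le j) ω)
        (fun ω => (X ω, Y ω)) = 0)
    (Ib : ℝ) (hIb : ∀ i : Fin m, condMI μ (Z i) Y X = Ib) :
    condMI μ (fun ω (i : Fin m) => Z i ω) Y X ≤ min (condEntH μ Y X) (m * Ib) := by
  classical
  have hXf : MFib X := MFib.of_meas hX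
  have hYf : MFib Y := MFib.of_meas hY
  have hZf : ∀ i, MFib (Z i) := fun i => MFib.of_meas (hZ i)
  -- Bound 1 : I(Z_{1:m}; Y | X) ≤ H(Y | X)
  have hb1 : condMI μ (fun ω (i : Fin m) => Z i ω) Y X ≤ condEntH μ Y X := by
    have hWf : MFib (fun ω (i : Fin m) => Z i ω) := MFib.pi hZf
    rw [condMI_comm]
    have h0 : 0 ≤ condEntH μ Y (fun ω => ((fun ω (i : Fin m) => Z i ω) ω, X ω)) :=
      condEntH_nonneg (hWf.pair hXf) hYf
    unfold condMI
    linarith [h0]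
  -- Bound 2 : induction on prefixes
  have key : ∀ (k : ℕ) (hk : k ≤ m),
      condMI μ (fun ω (j : Fin k) => Z (Fin.castLE hk j) ω) Y X ≤ (k : ℝ) * Ib := by
    intro k
    induction k with
    | zero =>
      intro hk
      haveI : Subsingleton (∀ j : Fin 0, 𝓩 (Fin.castLE hk j)) :=
        ⟨fun a b => funext fun j => j.elim0⟩
      haveI : Nonempty (∀ j : Fin 0, 𝓩 (Fin.castLE hk j)) := ⟨fun j => j.elim0⟩
      rw [condMI_of_subsingleton]
      simp
    | succ k ih =>
      intro hk
      have hkm : k ≤ m := Nat.le_of_succ_le hk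
      have hklt : k < m := hk
      set Wk := fun ω (j : Fin k) => Z (Fin.castLE hkm j) ω with hWkdef
      set Zk := Z ⟨k, hklt⟩ with hZkdef
      have hWkf : MFib Wk := MFib.pi (fun j => hZf _)
      have e0 : condMI μ (fun ω (j : Fin (k+1)) => Z (Fin.castLE hk j) ω) Y X
          = condMI μ (fun ω => (Zk ω, Wk ω)) Y X := by
        refine condMI_congr
          (fun p : (𝓩 ⟨k, hklt⟩) × (∀ j : Fin k, 𝓩 (Fin.castLE hkm j)) =>
            (Fin.snoc (α := fun j : Fin (k+1) => 𝓩 (Fin.castLE hk j)) p.2 p.1))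
          id id ?_ Function.injective_id Function.injective_id ?_
          (fun ω => rfl) (fun ω => rfl)
        · intro p q h
          have h1 : p.1 = q.1 := by
            have := congrFun h (Fin.last k)
            simpa [Fin.snoc_last] using this
          have h2 : p.2 = q.2 := by
            funext j
            have := congrFun h (Fin.castSucc j)
            simpa [Fin.snoc_castSucc] using this
          exact Prod.ext h1 h2
        · intro ω
          funext j
          refine Fin.lastCases ?_ ?_ j
          · exact (Fin.snoc_last (α := fun j : Fin (k+1) => 𝓩 (Fin.castLE hk j)) (Zk ω) (Wk ω)).symm
          · intro i
            exact (Fin.snoc_castSucc (α := fun j : Fin (k+1) => 𝓩 (Fin.castLE hk j)) (Zk ω) (Wk ω) i).symm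
      rw [e0, condMI_chain_fst]
      have hd1 : condMI μ Zk (fun ω => (Y ω, Wk ω)) X
          = condMI μ Zk Wk X + condMI μ Zk Y (fun ω => (Wk ω, X ω)) :=
        condMI_chain_snd Zk Y Wk X
      have hd2 : condMI μ Zk (fun ω => (Wk ω, Y ω)) X
          = condMI μ Zk Y X + condMI μ Zk Wk (fun ω => (Y ω, X ω)) :=
        condMI_chain_snd Zk Wk Y X
      have hswap : condMI μ Zk (fun ω => (Y ω, Wk ω)) X
          = condMI μ Zk (fun ω => (Wk ω, Y ω)) X :=
        condMI_congr id (fun p => (p.2, p.1)) id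
          Function.injective_id
          ((Function.LeftInverse.injective (g := fun p => (p.2, p.1)) (fun p => rfl)))
          Function.injective_id (fun ω => rfl) (fun ω => rfl) (fun ω => rfl)
      have hCI0 : condMI μ Zk Wk (fun ω => (X ω, Y ω)) = 0 := hCI ⟨k, hklt⟩
      have hCI1 : condMI μ Zk Wk (fun ω => (Y ω, X ω)) = 0 := by
        rw [← hCI0]
        exact condMI_congr id id (fun p => (p.2, p.1))
          Function.injective_id Function.injective_id
          ((Function.LeftInverse.injective (g := fun p => (p.2, p.1)) (fun p => rfl)))
          (fun ω => rfl) (fun ω => rfl) (fun ω => rfl)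
      have hIb0 : condMI μ Zk Y X = Ib := hIb ⟨k, hklt⟩
      have hnn : 0 ≤ condMI μ Zk Wk X := condMI_nonneg (hZf _) hWkf hXf
      have hih := ih hkm
      push_cast
      linarith [hd1, hd2, hswap, hCI1, hIb0, hnn, hih]
  refine le_min hb1 ?_
  exact key m le_rfl
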